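/- arXiv:math/0204175 — 2 statements merged into one kernel-verified Lean document; each statement's English description precedes it below -/
import Mathlib

section
/- Let M ≥ N ≥ 1, let φ_M(S) = [π^{N(N−1)/2} ∏_{j=1}^N (M−j)!]^{-1} (det S)^{M−N} exp(−Tr S) be the density (on positive semidefinite matrices) of LUE(N,M), and set ψ_M(H) = M^{N²/2} φ_M(M·I_N + √M·H) for Hermitian H (with ψ_M(H)=0 when M·I_N + √M·H is not positive semidefinite). Then for every N×N Hermitian matrix H, ψ_M(H) converges as M → ∞ to ψ(H) = 2^{−N/2} π^{−N²/2} exp(−Tr(H²)/2), the density of GUE(N) with respect to Lebesgue measure on H_N. -/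
open MeasureTheory Filter Topology Matrix
open scoped NNReal BigOperators Classical ComplexOrder

noncomputable section

/-- The density `φ_M` of `LUE(N,M)` on positive semidefinite Hermitian matrices:
`φ_M(S) = [π^{N(N-1)/2} ∏_{j=1}^N (M-j)!]⁻¹ (det S)^{M-N} exp(-Tr S)` (and `0` off the
positive semidefinite cone). For Hermitian positive semidefinite `S`, `det S` and `Tr S`
are real, so we use their real parts. -/
def luePhi (N M : ℕ) (S : Matrix (Fin N) (Fin N) ℂ) : ℝ :=
  if S.PosSemidef then
    (Real.pi ^ (N * (N - 1) / 2) * ∏ j ∈ Finset.range N, ((M - (j + 1)).factorial : ℝ))⁻¹ *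
      (S.det.re) ^ (M - N) * Real.exp (-S.trace.re)
  else 0

/-- The rescaled density `ψ_M(H) = M^{N²/2} φ_M(M·I_N + √M·H)`. -/
def luePsi (N M : ℕ) (H : Matrix (Fin N) (Fin N) ℂ) : ℝ :=
  (M : ℝ) ^ ((N : ℝ) ^ 2 / 2) *
    luePhi N M ((M : ℂ) • (1 : Matrix (Fin N) (Fin N) ℂ) + (Real.sqrt M : ℂ) • H)

lemma stirling_aux (k : ℕ) :
    Tendsto (fun M : ℕ => (M:ℝ)^(M-k) * Real.sqrt M * Real.exp (-(M:ℝ)) / ((M-k).factorial : ℝ))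
      atTop (𝓝 (Real.sqrt (2*Real.pi))⁻¹) := by
  have hπ : 0 < Real.pi := Real.pi_pos
  set F : ℕ → ℝ := fun n =>
    (1 + (k:ℝ)/n)^n * Real.sqrt (((n:ℝ)+k)/(2*n)) * Real.exp (-(k:ℝ)) / Stirling.stirlingSeq n
    with hF_def
  have h1 : Tendsto (fun n : ℕ => (1 + (k:ℝ)/n)^n) atTop (𝓝 (Real.exp k)) :=
    Real.tendsto_one_add_div_pow_exp k
  have h2 : Tendsto (fun n : ℕ => Real.sqrt (((n:ℝ)+k)/(2*n))) atTop (𝓝 (Real.sqrt (1/2))) := by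
    have hb : Tendsto (fun n : ℕ => ((n:ℝ)+k)/(2*n)) atTop (𝓝 (1/2)) := by
      have : Tendsto (fun n : ℕ => (1 + (k:ℝ)/n)/2) atTop (𝓝 ((1+0)/2)) :=
        (tendsto_const_nhds.add (tendsto_const_div_atTop_nhds_zero_nat (k:ℝ))).div_const 2
      rw [show ((1:ℝ)+0)/2 = 1/2 by norm_num] at this
      apply this.congr'
      filter_upwards [eventually_gt_atTop 0] with n hn
      have hn' : (n:ℝ) ≠ 0 := Nat.cast_ne_zero.2 hn.ne'
      rw [one_add_div hn', div_div, mul_comm]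
    exact (Real.continuous_sqrt.tendsto _).comp hb
  have h3 := Stirling.tendsto_stirlingSeq_sqrt_pi
  have hc : Tendsto (fun _ : ℕ => Real.exp (-(k:ℝ))) atTop (𝓝 (Real.exp (-(k:ℝ)))) :=
    tendsto_const_nhds
  have hFlim : Tendsto F atTop
      (𝓝 (Real.exp k * Real.sqrt (1/2) * Real.exp (-(k:ℝ)) / Real.sqrt Real.pi)) :=
    ((h1.mul h2).mul hc).div h3 (by positivity)
  have hval : Real.exp k * Real.sqrt (1/2) * Real.exp (-(k:ℝ)) / Real.sqrt Real.pi
      = (Real.sqrt (2*Real.pi))⁻¹ := by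
    have he : Real.exp (k:ℝ) * Real.exp (-(k:ℝ)) = 1 := by
      rw [← Real.exp_add]; simp
    rw [Real.sqrt_mul (by norm_num : (0:ℝ) ≤ 2), mul_inv, one_div, Real.sqrt_inv]
    rw [div_eq_mul_inv, mul_right_comm, mul_right_comm _ _ (Real.exp (-(k:ℝ)))]
    linear_combination (Real.sqrt 2)⁻¹ * (Real.sqrt Real.pi)⁻¹ * he
  rw [hval] at hFlim
  apply (hFlim.comp (tendsto_sub_atTop_nat k)).congr'
  filter_upwards [eventually_ge_atTop (k+1)] with M hM
  have hkM : k ≤ M := by omega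
  set n := M - k with hn_def
  have hn1 : 1 ≤ n := by omega
  have hMn : M = n + k := by omega
  have hcast : (M:ℝ) = (n:ℝ) + k := by rw [hMn]; push_cast; ring
  have hnpos : (0:ℝ) < n := by exact_mod_cast hn1
  have hA : (1+(k:ℝ)/n)^n * ((n:ℝ)/Real.exp 1)^n = ((n:ℝ)+k)^n * Real.exp (-(n:ℝ)) := by
    rw [← mul_pow, show (1+(k:ℝ)/n) * ((n:ℝ)/Real.exp 1) = ((n:ℝ)+k)/Real.exp 1 by
      field_simp]
    rw [div_pow, Real.exp_one_pow, Real.exp_neg, div_eq_mul_inv]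
  have hB : Real.sqrt (((n:ℝ)+k)/(2*n)) * Real.sqrt (2*n) = Real.sqrt ((n:ℝ)+k) := by
    rw [← Real.sqrt_mul (by positivity)]
    congr 1
    field_simp
  have hC : Real.exp (-(k:ℝ)) * Real.exp (-(n:ℝ)) = Real.exp (-((n:ℝ)+k)) := by
    rw [← Real.exp_add]; ring_nf
  have hnum : (1 + (k:ℝ)/n)^n * Real.sqrt (((n:ℝ)+k)/(2*n)) * Real.exp (-(k:ℝ))
      * (Real.sqrt (2*(n:ℝ)) * ((n:ℝ)/Real.exp 1)^n)
      = ((n:ℝ)+k)^n * Real.sqrt ((n:ℝ)+k) * Real.exp (-((n:ℝ)+k)) := by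
    calc (1 + (k:ℝ)/n)^n * Real.sqrt (((n:ℝ)+k)/(2*n)) * Real.exp (-(k:ℝ))
        * (Real.sqrt (2*(n:ℝ)) * ((n:ℝ)/Real.exp 1)^n)
        = ((1+(k:ℝ)/n)^n * ((n:ℝ)/Real.exp 1)^n)
          * (Real.sqrt (((n:ℝ)+k)/(2*n)) * Real.sqrt (2*(n:ℝ))) * Real.exp (-(k:ℝ)) := by ring
      _ = (((n:ℝ)+k)^n * Real.exp (-(n:ℝ))) * Real.sqrt ((n:ℝ)+k) * Real.exp (-(k:ℝ)) := by
          rw [hA, hB]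
      _ = ((n:ℝ)+k)^n * Real.sqrt ((n:ℝ)+k) * Real.exp (-((n:ℝ)+k)) := by
          rw [← hC]; ring
  show F n = _
  rw [hF_def]
  simp only
  rw [Stirling.stirlingSeq, div_div_eq_mul_div, hnum, hcast]

lemma sqrt_cast_atTop : Tendsto (fun M : ℕ => Real.sqrt M) atTop atTop := by
  have := (tendsto_rpow_atTop (by norm_num : (0:ℝ) < 1/2)).comp tendsto_natCast_atTop_atTop
  exact this.congr fun M => (Real.sqrt_eq_rpow _).symm

lemma log_taylor_bound {x : ℝ} (hx : |x| ≤ 1/2) :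
    |Real.log (1 + x) - x + x^2/2| ≤ 2*|x|^3 := by
  have h1 : |(-x)| < 1 := by rw [abs_neg]; linarith [abs_nonneg x]
  have h := Real.abs_log_sub_add_sum_range_le h1 2
  rw [Finset.sum_range_succ, Finset.sum_range_succ, Finset.sum_range_zero,
    show (1:ℝ) - -x = 1 + x by ring] at h
  push_cast at h
  have heq : Real.log (1+x) - x + x^2/2 = 0 + (-x)^1/(0+1) + (-x)^2/(1+1) + Real.log (1+x) := by
    ring
  rw [heq]
  refine h.trans ?_
  rw [abs_neg, div_le_iff₀ (by linarith)]
  nlinarith [pow_nonneg (abs_nonneg x) 3, hx, abs_nonneg x]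

lemma ell_tendsto (N : ℕ) (t : ℝ) :
    Tendsto (fun M : ℕ => ((M - N : ℕ):ℝ) * Real.log (1 + t / Real.sqrt M) - Real.sqrt M * t)
      atTop (𝓝 (-t^2/2)) := by
  set u : ℕ → ℝ := fun M =>
    Real.log (1 + t / Real.sqrt M) - t / Real.sqrt M + (t / Real.sqrt M)^2/2 with hu_def
  have hA : Tendsto (fun M : ℕ => ((M - N : ℕ):ℝ) * u M) atTop (𝓝 0) := by
    apply squeeze_zero_norm' (a := fun M : ℕ => 2*|t|^3 / Real.sqrt M)
    · filter_upwards [sqrt_cast_atTop.eventually_ge_atTop (2*|t| + 1),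
        eventually_ge_atTop 1] with M hM hM1
      have hs1 : (1:ℝ) ≤ Real.sqrt M := by linarith [abs_nonneg t]
      have hspos : (0:ℝ) < Real.sqrt M := by linarith
      have hxb : |t / Real.sqrt M| ≤ 1/2 := by
        rw [abs_div, abs_of_pos hspos, div_le_iff₀ hspos]
        linarith [abs_nonneg t]
      have hb := log_taylor_bound hxb
      have hMN : ((M - N : ℕ):ℝ) ≤ M := by
        exact_mod_cast Nat.cast_le.2 (Nat.sub_le M N)
      have hMN0 : (0:ℝ) ≤ ((M - N : ℕ):ℝ) := Nat.cast_nonneg _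
      have hsq : Real.sqrt M * Real.sqrt M = (M:ℝ) :=
        Real.mul_self_sqrt (Nat.cast_nonneg M)
      rw [Real.norm_eq_abs, abs_mul, Nat.abs_cast]
      have h3 : |t / Real.sqrt M|^3 = |t|^3 / ((M:ℝ) * Real.sqrt M) := by
        rw [abs_div, abs_of_pos hspos, div_pow]
        congr 1
        rw [pow_succ, pow_two, hsq]
      have hMpos : (0:ℝ) < M := by exact_mod_cast hM1
      calc ((M - N : ℕ):ℝ) * |u M| ≤ (M:ℝ) * (2*|t|^3 / ((M:ℝ) * Real.sqrt M)) := by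
            apply mul_le_mul hMN ?_ (abs_nonneg _) (Nat.cast_nonneg _)
            rw [hu_def]
            simp only
            calc |Real.log (1 + t / Real.sqrt M) - t / Real.sqrt M + (t / Real.sqrt M)^2/2|
                ≤ 2*|t / Real.sqrt M|^3 := hb
              _ = 2*|t|^3 / ((M:ℝ) * Real.sqrt M) := by rw [h3, mul_div_assoc]
        _ = 2*|t|^3 / Real.sqrt M := by
            field_simp
    · exact tendsto_const_nhds.div_atTop sqrt_cast_atTop
  have hB : Tendsto (fun M : ℕ => ((M - N : ℕ):ℝ)/M) atTop (𝓝 1) := by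
    have h1 : Tendsto (fun M : ℕ => 1 - (N:ℝ)/M) atTop (𝓝 (1 - 0)) :=
      tendsto_const_nhds.sub (tendsto_const_div_atTop_nhds_zero_nat (N:ℝ))
    rw [sub_zero] at h1
    apply h1.congr'
    filter_upwards [eventually_ge_atTop (max N 1)] with M hM
    have hN : N ≤ M := le_trans (le_max_left _ _) hM
    have hM1 : (1:ℕ) ≤ M := le_trans (le_max_right _ _) hM
    have hM0 : (M:ℝ) ≠ 0 := by positivity
    rw [Nat.cast_sub hN]
    field_simp
  have hC : Tendsto (fun M : ℕ => (N:ℝ)*t / Real.sqrt M) atTop (𝓝 0) :=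
    tendsto_const_nhds.div_atTop sqrt_cast_atTop
  have hlim : Tendsto (fun M : ℕ =>
      ((M - N : ℕ):ℝ) * u M - (((M - N : ℕ):ℝ)/M) * (t^2/2) - (N:ℝ)*t / Real.sqrt M)
      atTop (𝓝 (0 - 1 * (t^2/2) - 0)) :=
    (hA.sub (hB.mul tendsto_const_nhds)).sub hC
  rw [show (0:ℝ) - 1 * (t^2/2) - 0 = -t^2/2 by ring] at hlim
  apply hlim.congr'
  filter_upwards [eventually_ge_atTop (max N 1)] with M hM
  have hN : N ≤ M := le_trans (le_max_left _ _) hM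
  have hM1 : (1:ℕ) ≤ M := le_trans (le_max_right _ _) hM
  have hMpos : (0:ℝ) < M := by exact_mod_cast hM1
  have hspos : (0:ℝ) < Real.sqrt M := Real.sqrt_pos.2 hMpos
  have hsq : Real.sqrt M * Real.sqrt M = (M:ℝ) := Real.mul_self_sqrt (Nat.cast_nonneg M)
  rw [hu_def]
  simp only
  rw [Nat.cast_sub hN]
  set s := Real.sqrt (M:ℝ) with hs_def
  rw [← hsq]
  have hs0 : s ≠ 0 := ne_of_gt hspos
  field_simp
  ring

section MatrixLemmas
variable {N : ℕ} {H : Matrix (Fin N) (Fin N) ℂ}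

lemma key_decomp (hH : H.IsHermitian) (M : ℕ) :
    (M : ℂ) • (1 : Matrix (Fin N) (Fin N) ℂ) + (Real.sqrt M : ℂ) • H
      = (hH.eigenvectorUnitary : Matrix (Fin N) (Fin N) ℂ) *
        Matrix.diagonal (fun i => (((M:ℝ) + Real.sqrt M * hH.eigenvalues i : ℝ) : ℂ)) *
        star (hH.eigenvectorUnitary : Matrix (Fin N) (Fin N) ℂ) := by
  set U : Matrix (Fin N) (Fin N) ℂ := (hH.eigenvectorUnitary : Matrix (Fin N) (Fin N) ℂ)
  have hUU : U * star U = 1 := (Matrix.mem_unitaryGroup_iff).mp (hH.eigenvectorUnitary).2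
  have hspec : H = U * Matrix.diagonal (fun i => (hH.eigenvalues i : ℂ)) * star U :=
    hH.spectral_theorem
  have hdiag : Matrix.diagonal (fun i => (((M:ℝ) + Real.sqrt M * hH.eigenvalues i : ℝ) : ℂ))
      = (M:ℂ) • (1 : Matrix (Fin N) (Fin N) ℂ)
        + (Real.sqrt M : ℂ) • Matrix.diagonal (fun i => (hH.eigenvalues i : ℂ)) := by
    ext i j
    by_cases hij : i = j
    · subst hij
      simp [Matrix.diagonal, Matrix.one_apply]
    · simp [Matrix.diagonal, Matrix.one_apply, hij]
  rw [hdiag, Matrix.mul_add, Matrix.add_mul, Matrix.mul_smul, Matrix.smul_mul,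
    Matrix.mul_smul, Matrix.smul_mul, mul_one, hUU, ← hspec]

lemma det_S (hH : H.IsHermitian) (M : ℕ) :
    ((M : ℂ) • (1 : Matrix (Fin N) (Fin N) ℂ) + (Real.sqrt M : ℂ) • H).det
      = ((∏ i, ((M:ℝ) + Real.sqrt M * hH.eigenvalues i) : ℝ) : ℂ) := by
  have hUU : (hH.eigenvectorUnitary : Matrix (Fin N) (Fin N) ℂ) *
      star (hH.eigenvectorUnitary : Matrix (Fin N) (Fin N) ℂ) = 1 :=
    (Matrix.mem_unitaryGroup_iff).mp (hH.eigenvectorUnitary).2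
  rw [key_decomp hH M, Matrix.det_mul_right_comm, hUU, Matrix.one_mul, Matrix.det_diagonal]
  push_cast
  rfl

lemma trace_S (hH : H.IsHermitian) (M : ℕ) :
    ((M : ℂ) • (1 : Matrix (Fin N) (Fin N) ℂ) + (Real.sqrt M : ℂ) • H).trace
      = ((∑ i, ((M:ℝ) + Real.sqrt M * hH.eigenvalues i) : ℝ) : ℂ) := by
  have hU'U : star (hH.eigenvectorUnitary : Matrix (Fin N) (Fin N) ℂ) *
      (hH.eigenvectorUnitary : Matrix (Fin N) (Fin N) ℂ) = 1 :=
    (Matrix.mem_unitaryGroup_iff').mp (hH.eigenvectorUnitary).2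
  rw [key_decomp hH M, Matrix.trace_mul_cycle, hU'U, Matrix.one_mul, Matrix.trace_diagonal]
  push_cast
  rfl

lemma posSemidef_S (hH : H.IsHermitian) (M : ℕ)
    (h : ∀ i, 0 ≤ (M:ℝ) + Real.sqrt M * hH.eigenvalues i) :
    ((M : ℂ) • (1 : Matrix (Fin N) (Fin N) ℂ) + (Real.sqrt M : ℂ) • H).PosSemidef := by
  rw [key_decomp hH M]
  have hD : (Matrix.diagonal (fun i => (((M:ℝ) + Real.sqrt M * hH.eigenvalues i : ℝ) : ℂ))).PosSemidef := by
    rw [Matrix.posSemidef_diagonal_iff]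
    intro i
    exact_mod_cast Complex.zero_le_real.mpr (h i)
  simpa [Matrix.star_eq_conjTranspose] using
    hD.mul_mul_conjTranspose_same (hH.eigenvectorUnitary : Matrix (Fin N) (Fin N) ℂ)

lemma trace_sq (hH : H.IsHermitian) :
    (H * H).trace.re = ∑ i, (hH.eigenvalues i)^2 := by
  have hU'U : star (hH.eigenvectorUnitary : Matrix (Fin N) (Fin N) ℂ) *
      (hH.eigenvectorUnitary : Matrix (Fin N) (Fin N) ℂ) = 1 :=
    (Matrix.mem_unitaryGroup_iff').mp (hH.eigenvectorUnitary).2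
  set U : Matrix (Fin N) (Fin N) ℂ := (hH.eigenvectorUnitary : Matrix (Fin N) (Fin N) ℂ)
  set D : Matrix (Fin N) (Fin N) ℂ := Matrix.diagonal (fun i => (hH.eigenvalues i : ℂ)) with hD
  have hspec : H = U * D * star U := hH.spectral_theorem
  have h2 : H * H = U * (D * D) * star U := by
    rw [hspec]
    calc U * D * star U * (U * D * star U) = U * D * (star U * U) * D * star U := by
          simp only [Matrix.mul_assoc]
      _ = U * (D * D) * star U := by rw [hU'U]; simp only [Matrix.mul_one, Matrix.mul_assoc]
  rw [h2, Matrix.trace_mul_cycle, ← Matrix.mul_assoc, hU'U, Matrix.one_mul]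
  rw [hD, Matrix.diagonal_mul_diagonal, Matrix.trace_diagonal]
  have : ∑ i, ((hH.eigenvalues i : ℂ) * (hH.eigenvalues i : ℂ))
      = ((∑ i, (hH.eigenvalues i)^2 : ℝ) : ℂ) := by
    push_cast
    ring_nf
  rw [this, Complex.ofReal_re]

end MatrixLemmas

/-- **Pointwise convergence of densities.** -/
theorem luePsi_tendsto_gue_density (N : ℕ) (hN : 1 ≤ N)
    (H : Matrix (Fin N) (Fin N) ℂ) (hH : H.IsHermitian) :
    Tendsto (fun M : ℕ => luePsi N M H) atTop
      (𝓝 ((2 : ℝ) ^ (-(N : ℝ) / 2) * Real.pi ^ (-(N : ℝ) ^ 2 / 2) *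
        Real.exp (-(H * H).trace.re / 2))) := by
  have hπ : (0:ℝ) < Real.pi := Real.pi_pos
  set lam : Fin N → ℝ := hH.eigenvalues with hlam
  -- convergence of the model sequence
  have hst : Tendsto (fun M : ℕ => ∏ j ∈ Finset.range N,
      ((M:ℝ)^(M-(j+1)) * Real.sqrt M * Real.exp (-(M:ℝ)) / ((M-(j+1)).factorial : ℝ)))
      atTop (𝓝 (∏ _j ∈ Finset.range N, (Real.sqrt (2*Real.pi))⁻¹)) :=
    tendsto_finset_prod _ (fun j _ => stirling_aux (j+1))
  have hexp : Tendsto (fun M : ℕ => ∏ i : Fin N,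
      Real.exp (((M - N : ℕ):ℝ) * Real.log (1 + lam i / Real.sqrt M) - Real.sqrt M * lam i))
      atTop (𝓝 (∏ i : Fin N, Real.exp (-lam i^2/2))) :=
    tendsto_finset_prod _ (fun i _ =>
      (Real.continuous_exp.tendsto _).comp (ell_tendsto N (lam i)))
  have hP : Tendsto (fun M : ℕ =>
      (∏ j ∈ Finset.range N,
        ((M:ℝ)^(M-(j+1)) * Real.sqrt M * Real.exp (-(M:ℝ)) / ((M-(j+1)).factorial : ℝ)))
      * ((Real.pi:ℝ)^(N * (N - 1) / 2))⁻¹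
      * ∏ i : Fin N,
        Real.exp (((M - N : ℕ):ℝ) * Real.log (1 + lam i / Real.sqrt M) - Real.sqrt M * lam i))
      atTop (𝓝 ((∏ _j ∈ Finset.range N, (Real.sqrt (2*Real.pi))⁻¹)
        * ((Real.pi:ℝ)^(N * (N - 1) / 2))⁻¹
        * ∏ i : Fin N, Real.exp (-lam i^2/2))) :=
    (hst.mul tendsto_const_nhds).mul hexp
  -- identify the limit value
  have hval : (∏ _j ∈ Finset.range N, (Real.sqrt (2*Real.pi))⁻¹)
      * ((Real.pi:ℝ)^(N * (N - 1) / 2))⁻¹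
      * (∏ i : Fin N, Real.exp (-lam i^2/2))
      = (2 : ℝ) ^ (-(N : ℝ) / 2) * Real.pi ^ (-(N : ℝ) ^ 2 / 2)
        * Real.exp (-(H * H).trace.re / 2) := by
    have hpe : Even (N * (N-1)) := by
      have h1 : N - 1 + 1 = N := Nat.succ_pred_eq_of_pos hN
      rw [mul_comm, ← h1]
      exact Nat.even_mul_succ_self (N-1)
    have hpcast : ((N * (N - 1) / 2 : ℕ) : ℝ) = (N:ℝ) * ((N:ℝ) - 1) / 2 := by
      have h2 : (N * (N - 1) / 2) * 2 = N * (N - 1) := Nat.div_mul_cancel hpe.two_dvd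
      have h3 := congrArg (Nat.cast (R := ℝ)) h2
      push_cast [Nat.cast_sub hN] at h3
      linarith
    have heq : (∏ i : Fin N, Real.exp (-lam i^2/2)) = Real.exp (-(H * H).trace.re / 2) := by
      rw [← Real.exp_sum, trace_sq hH]
      congr 1
      rw [← hlam]
      simp only [neg_div, Finset.sum_neg_distrib, ← Finset.sum_div]
    have hc : (∏ _j ∈ Finset.range N, (Real.sqrt (2*Real.pi))⁻¹)
        * ((Real.pi:ℝ)^(N * (N - 1) / 2))⁻¹
        = (2 : ℝ) ^ (-(N : ℝ) / 2) * Real.pi ^ (-(N : ℝ) ^ 2 / 2) := by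
      rw [Finset.prod_const, Finset.card_range]
      rw [Real.sqrt_mul (by norm_num : (0:ℝ) ≤ 2), mul_inv, mul_pow]
      have h2 : (Real.sqrt 2)⁻¹ ^ N = (2:ℝ) ^ (-(N:ℝ)/2) := by
        rw [Real.sqrt_eq_rpow, ← Real.rpow_neg (by norm_num : (0:ℝ) ≤ 2),
          ← Real.rpow_natCast ((2:ℝ) ^ (-(1/(2:ℝ)))) N, ← Real.rpow_mul (by norm_num : (0:ℝ) ≤ 2)]
        congr 1
        ring
      have h3 : (Real.sqrt Real.pi)⁻¹ ^ N = Real.pi ^ (-(N:ℝ)/2) := by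
        rw [Real.sqrt_eq_rpow, ← Real.rpow_neg hπ.le,
          ← Real.rpow_natCast (Real.pi ^ (-(1/(2:ℝ)))) N, ← Real.rpow_mul hπ.le]
        congr 1
        ring
      have h4 : ((Real.pi:ℝ)^(N * (N - 1) / 2))⁻¹
          = Real.pi ^ (-((N:ℝ) * ((N:ℝ) - 1) / 2)) := by
        rw [← Real.rpow_natCast Real.pi (N * (N - 1) / 2), ← Real.rpow_neg hπ.le, hpcast]
      rw [h2, h3, h4, mul_assoc, ← Real.rpow_add hπ]
      congr 2
      ring
    rw [heq, hc]
  rw [hval] at hP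
  -- eventual equality
  apply hP.congr'
  have hev : ∀ᶠ M : ℕ in atTop, N ≤ M ∧ ∀ i, |lam i| < Real.sqrt M := by
    refine (eventually_ge_atTop N).and ?_
    filter_upwards [sqrt_cast_atTop.eventually_gt_atTop (∑ i, |lam i|)] with M hM i
    exact lt_of_le_of_lt (Finset.single_le_sum (f := fun i => |lam i|)
      (fun _ _ => abs_nonneg _) (Finset.mem_univ i)) hM
  filter_upwards [hev] with M hMc
  obtain ⟨hNM, hlt⟩ := hMc
  have hM1 : 1 ≤ M := le_trans hN hNM
  have hMpos : (0:ℝ) < M := by exact_mod_cast hM1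
  have hspos : (0:ℝ) < Real.sqrt M := Real.sqrt_pos.2 hMpos
  have hsq : Real.sqrt M * Real.sqrt M = (M:ℝ) := Real.mul_self_sqrt (Nat.cast_nonneg M)
  have hdpos : ∀ i, (0:ℝ) < (M:ℝ) + Real.sqrt M * lam i := by
    intro i
    nlinarith [hlt i, neg_abs_le (lam i), hspos,
      mul_pos hspos (sub_pos.mpr (hlt i)),
      mul_le_mul_of_nonneg_left (neg_abs_le (lam i)) hspos.le]
  have hx : ∀ i, (0:ℝ) < 1 + lam i / Real.sqrt M := by
    intro i
    have h1 : -Real.sqrt M < lam i := (abs_lt.1 (hlt i)).1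
    have heq : 1 + lam i / Real.sqrt M = (Real.sqrt M + lam i) / Real.sqrt M := by
      field_simp
    rw [heq]
    exact div_pos (by linarith) hspos
  -- now unfold and compute
  rw [luePsi, luePhi, if_pos (posSemidef_S hH M (fun i => (hdpos i).le)),
    det_S hH M, trace_S hH M, Complex.ofReal_re, Complex.ofReal_re]
  -- component rewrites
  have hexp_eq : ∀ i : Fin N,
      Real.exp (((M - N : ℕ):ℝ) * Real.log (1 + lam i / Real.sqrt M) - Real.sqrt M * lam i)
      = (1 + lam i / Real.sqrt M)^(M-N) * Real.exp (-(Real.sqrt M * lam i)) := by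
    intro i
    rw [Real.exp_sub, ← Real.rpow_natCast (1 + lam i / Real.sqrt M) (M-N),
      Real.rpow_def_of_pos (hx i), mul_comm (Real.log _), div_eq_mul_inv, ← Real.exp_neg]
  have hprod_exp : (∏ i : Fin N,
      Real.exp (((M - N : ℕ):ℝ) * Real.log (1 + lam i / Real.sqrt M) - Real.sqrt M * lam i))
      = (∏ i : Fin N, (1 + lam i / Real.sqrt M)^(M-N))
        * ∏ i : Fin N, Real.exp (-(Real.sqrt M * lam i)) := by
    rw [← Finset.prod_mul_distrib]
    exact Finset.prod_congr rfl fun i _ => hexp_eq i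
  have hdfac : ∀ i : Fin N, (M:ℝ) + Real.sqrt M * lam i
      = (M:ℝ) * (1 + lam i / Real.sqrt M) := by
    intro i
    field_simp
    linear_combination lam i * hsq
  have hPprod : (∏ i : Fin N, ((M:ℝ) + Real.sqrt M * lam i))^(M-N)
      = ((M:ℝ)^(M-N))^N * ∏ i : Fin N, (1 + lam i / Real.sqrt M)^(M-N) := by
    rw [← Finset.prod_pow]
    rw [show (∏ i : Fin N, ((M:ℝ) + Real.sqrt M * lam i)^(M-N))
      = ∏ i : Fin N, ((M:ℝ)^(M-N) * (1 + lam i / Real.sqrt M)^(M-N)) from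
      Finset.prod_congr rfl fun i _ => by rw [hdfac i, mul_pow]]
    rw [Finset.prod_mul_distrib, Finset.prod_const, Finset.card_univ, Fintype.card_fin]
  have hT : Real.exp (-(∑ i : Fin N, ((M:ℝ) + Real.sqrt M * lam i)))
      = (Real.exp (-(M:ℝ)))^N * ∏ i : Fin N, Real.exp (-(Real.sqrt M * lam i)) := by
    rw [← Finset.sum_neg_distrib, Real.exp_sum]
    rw [show (∏ i : Fin N, Real.exp (-((M:ℝ) + Real.sqrt M * lam i)))
      = ∏ i : Fin N, (Real.exp (-(M:ℝ)) * Real.exp (-(Real.sqrt M * lam i))) from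
      Finset.prod_congr rfl fun i _ => by rw [← Real.exp_add]; ring_nf]
    rw [Finset.prod_mul_distrib, Finset.prod_const, Finset.card_univ, Fintype.card_fin]
  -- the power identity
  have hpow : (M:ℝ) ^ (((N:ℝ)^2)/2) * ((M:ℝ)^(M-N))^N
      = (∏ j ∈ Finset.range N, (M:ℝ)^(M-(j+1))) * (Real.sqrt M)^N := by
    have hgauss : (∑ j ∈ Finset.range N, (j:ℝ)) * 2 = (N:ℝ) * ((N:ℝ) - 1) := by
      have h1 := Finset.sum_range_id_mul_two N
      have h2 := congrArg (Nat.cast (R := ℝ)) h1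
      push_cast [Nat.cast_sub hN] at h2
      linarith
    have hsum : ((∑ j ∈ Finset.range N, (M-(j+1)) : ℕ):ℝ)
        = (N:ℝ)*(M:ℝ) - (∑ j ∈ Finset.range N, (j:ℝ)) - N := by
      rw [Nat.cast_sum]
      rw [show (∑ j ∈ Finset.range N, ((M - (j+1) : ℕ):ℝ))
        = ∑ j ∈ Finset.range N, ((M:ℝ) - (j:ℝ) - 1) from Finset.sum_congr rfl fun j hj => by
          rw [Nat.cast_sub (by have := Finset.mem_range.1 hj; omega)]; push_cast; ring]
      simp only [Finset.sum_sub_distrib, Finset.sum_const, Finset.card_range, smul_eq_mul,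
        mul_one]
      ring
    have e1 : ((M:ℝ)^(M-N))^N = (M:ℝ) ^ ((((M-N:ℕ)):ℝ) * N) := by
      rw [← Real.rpow_natCast (M:ℝ) (M-N), ← Real.rpow_natCast ((M:ℝ) ^ ((M-N:ℕ):ℝ)) N,
        ← Real.rpow_mul hMpos.le]
    have e2 : (Real.sqrt M)^N = (M:ℝ) ^ ((N:ℝ)/2) := by
      rw [Real.sqrt_eq_rpow, ← Real.rpow_natCast ((M:ℝ) ^ (1/(2:ℝ))) N,
        ← Real.rpow_mul hMpos.le]
      congr 1
      ring
    rw [Finset.prod_pow_eq_pow_sum, e1, e2,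
      ← Real.rpow_natCast (M:ℝ) (∑ j ∈ Finset.range N, (M-(j+1))),
      ← Real.rpow_add hMpos, ← Real.rpow_add hMpos]
    congr 1
    rw [hsum, Nat.cast_sub hNM]
    linear_combination (1/2:ℝ) * hgauss
  -- final algebraic assembly
  rw [hprod_exp, mul_inv, hPprod, hT]
  have hL : (∏ j ∈ Finset.range N,
      ((M:ℝ)^(M-(j+1)) * Real.sqrt M * Real.exp (-(M:ℝ)) / ((M-(j+1)).factorial : ℝ)))
      = ((M:ℝ) ^ (((N:ℝ)^2)/2) * ((M:ℝ)^(M-N))^N) * (Real.exp (-(M:ℝ)))^N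
        / (∏ j ∈ Finset.range N, ((M-(j+1)).factorial : ℝ)) := by
    rw [Finset.prod_div_distrib, Finset.prod_mul_distrib, Finset.prod_mul_distrib,
      Finset.prod_const, Finset.prod_const, Finset.card_range, hpow]
  rw [hL, div_eq_mul_inv]
  ring

end
end

section
/- For fixed N ≥ 1, the constants c_M = exp(−MN) · M^{N²/2} · M^{N(M−N)} / (π^{N(N−1)/2} ∏_{j=1}^N (M−j)!) converge, as M → ∞, to 2^{−N/2} π^{−N²/2}. -/
open Filter Topology Real
open scoped BigOperators

noncomputable def gfac (k M : ℕ) : ℝ :=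
  Real.sqrt Real.pi / Stirling.stirlingSeq (M - k) *
    ((M : ℝ) / ((M : ℝ) - k)) ^ (((M : ℝ) - k) + 1/2 : ℝ) * Real.exp (-(k : ℝ))

lemma aux_pow_tendsto (k : ℕ) :
    Tendsto (fun M : ℕ => ((M : ℝ) / ((M : ℝ) - k)) ^ (((M : ℝ) - k) + 1/2 : ℝ)) atTop
      (𝓝 (Real.exp k)) := by
  have hlog : Tendsto (fun x : ℝ => Real.log (1 + k / x)) atTop (𝓝 0) := by
    have h0 : Tendsto (fun x : ℝ => 1 + (k : ℝ) / x) atTop (𝓝 1) := by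
      simpa [div_eq_mul_inv] using (tendsto_inv_atTop_zero.const_mul (k : ℝ)).const_add 1
    simpa [Function.comp_def] using (Real.continuousAt_log one_ne_zero).tendsto.comp h0
  have h1 : Tendsto (fun x : ℝ => (x + 1/2) * Real.log (1 + k / x)) atTop (𝓝 (k : ℝ)) := by
    have := (Real.tendsto_mul_log_one_add_div_atTop (k : ℝ)).add (hlog.const_mul (1/2))
    simpa using this.congr (fun x => by ring)
  have h3 := (Real.continuous_exp.tendsto _).comp h1
  have h4 : Tendsto (fun M : ℕ => (M : ℝ) - k) atTop atTop :=
    tendsto_atTop_add_const_right _ _ tendsto_natCast_atTop_atTop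
  refine (h3.comp h4).congr' ?_
  filter_upwards [eventually_ge_atTop (k + 1)] with M hM
  have hx : (0 : ℝ) < (M : ℝ) - k := by
    have : (k : ℝ) + 1 ≤ (M : ℝ) := by exact_mod_cast hM
    linarith
  have hb : (0 : ℝ) < 1 + (k : ℝ) / ((M : ℝ) - k) := by positivity
  have hbe : 1 + (k : ℝ) / ((M : ℝ) - k) = (M : ℝ) / ((M : ℝ) - k) := by
    field_simp
    ring
  simp only [Function.comp]
  rw [← hbe, Real.rpow_def_of_pos hb, mul_comm]

lemma gfac_tendsto (k : ℕ) : Tendsto (fun M : ℕ => gfac k M) atTop (𝓝 1) := by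
  have hst : Tendsto (fun M : ℕ => Stirling.stirlingSeq (M - k)) atTop (𝓝 (Real.sqrt Real.pi)) :=
    Stirling.tendsto_stirlingSeq_sqrt_pi.comp (tendsto_sub_atTop_nat k)
  have hπ : Real.sqrt Real.pi ≠ 0 := by positivity
  have h1 : Tendsto (fun M : ℕ => Real.sqrt Real.pi / Stirling.stirlingSeq (M - k)) atTop
      (𝓝 1) := by
    have := (tendsto_const_nhds (x := Real.sqrt Real.pi) (f := atTop (α := ℕ))).div hst hπ
    simpa [div_self hπ, Pi.div_def] using this
  have := (h1.mul (aux_pow_tendsto k)).mul (tendsto_const_nhds (x := Real.exp (-(k : ℝ))))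
  simpa [gfac, ← Real.exp_add] using this

lemma sum_aux (N : ℕ) (x : ℝ) :
    ∑ j ∈ Finset.range N, (x - (j + 1) + 1/2) = N * x - (N : ℝ) ^ 2 / 2 := by
  induction N with
  | zero => simp
  | succ n ih => rw [Finset.sum_range_succ, ih]; push_cast; ring

lemma gfac_eq (k M : ℕ) (hk : 1 ≤ k) (hkM : k < M) :
    gfac k M = Real.sqrt (2 * Real.pi) * Real.exp (-(M : ℝ)) *
      (M : ℝ) ^ ((M : ℝ) - k + 1/2 : ℝ) / ((M - k).factorial : ℝ) := by
  have hn : 1 ≤ M - k := Nat.le_sub_of_add_le (by omega)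
  have hcast : ((M - k : ℕ) : ℝ) = (M : ℝ) - k := by
    push_cast [Nat.cast_sub hkM.le]; ring
  have hnR : (0 : ℝ) < ((M - k : ℕ) : ℝ) := by exact_mod_cast hn
  have hMR : (0 : ℝ) < (M : ℝ) := by
    have : 0 < M := by omega
    exact_mod_cast this
  have hfac : (0 : ℝ) < ((M - k).factorial : ℝ) := by exact_mod_cast (M - k).factorial_pos
  have hst : Stirling.stirlingSeq (M - k) =
      ((M - k).factorial : ℝ) / (Real.sqrt (2 * ((M - k : ℕ) : ℝ)) *
        (((M - k : ℕ) : ℝ) / Real.exp 1) ^ (M - k)) := rfl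
  have hexp : Real.exp (-(M : ℝ)) = Real.exp (-((M - k : ℕ) : ℝ)) * Real.exp (-(k : ℝ)) := by
    rw [← Real.exp_add]; congr 1; rw [hcast]; ring
  rw [gfac, hst, hexp]
  rw [show (M : ℝ) - (k : ℝ) = ((M - k : ℕ) : ℝ) from hcast.symm]
  set c : ℝ := ((M - k : ℕ) : ℝ) with hc
  have hsq2 : Real.sqrt (2 * c) = Real.sqrt 2 * Real.sqrt c := Real.sqrt_mul (by norm_num) c
  have hsq2π : Real.sqrt (2 * Real.pi) = Real.sqrt 2 * Real.sqrt Real.pi :=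
    Real.sqrt_mul (by norm_num) _
  rw [hsq2, hsq2π, div_pow, Real.exp_one_pow,
    Real.div_rpow hMR.le hnR.le, Real.rpow_add hMR, Real.rpow_add hnR,
    ← Real.sqrt_eq_rpow, ← Real.sqrt_eq_rpow, Real.rpow_natCast, Real.rpow_natCast,
    Real.exp_neg c]
  have h1 : Real.sqrt c ≠ 0 := by positivity
  have h2 : c ^ (M - k) ≠ 0 := by positivity
  field_simp
  ring

/-- **Convergence of the normalizing constants.** For fixed `N ≥ 1`, the constants
`c_M = exp(-MN) · M^{N²/2} · M^{N(M-N)} / (π^{N(N-1)/2} ∏_{j=1}^N (M-j)!)` converge to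
`2^{-N/2} π^{-N²/2}` as `M → ∞`. -/
theorem cM_tendsto (N : ℕ) (hN : 1 ≤ N) :
    Tendsto
      (fun M : ℕ =>
        Real.exp (-(M * N : ℝ)) * (M : ℝ) ^ ((N : ℝ) ^ 2 / 2) * (M : ℝ) ^ (N * (M - N)) /
          (Real.pi ^ (N * (N - 1) / 2) * ∏ j ∈ Finset.range N, ((M - (j + 1)).factorial : ℝ)))
      atTop
      (𝓝 ((2 : ℝ) ^ (-(N : ℝ) / 2) * Real.pi ^ (-(N : ℝ) ^ 2 / 2))) := by
  set T : ℝ := (2 : ℝ) ^ (-(N : ℝ) / 2) * Real.pi ^ (-(N : ℝ) ^ 2 / 2) with hT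
  have hprod : Tendsto (fun M : ℕ => ∏ j ∈ Finset.range N, gfac (j + 1) M) atTop (𝓝 1) := by
    have := tendsto_finset_prod (Finset.range N)
      (fun j _ => gfac_tendsto (j + 1))
    simpa using this
  have key : Tendsto (fun M : ℕ => T * ∏ j ∈ Finset.range N, gfac (j + 1) M) atTop (𝓝 T) := by
    simpa using (tendsto_const_nhds (x := T) (f := atTop (α := ℕ))).mul hprod
  refine key.congr' ?_
  filter_upwards [eventually_ge_atTop (N + 1)] with M hM
  have hMR : (0 : ℝ) < (M : ℝ) := by
    have : 0 < M := by omega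
    exact_mod_cast this
  have hP : (0 : ℝ) < ∏ j ∈ Finset.range N, ((M - (j + 1)).factorial : ℝ) :=
    Finset.prod_pos fun j _ => by exact_mod_cast (M - (j + 1)).factorial_pos
  have hQ : (0 : ℝ) < Real.pi ^ (N * (N - 1) / 2) := by positivity
  rw [Finset.prod_congr rfl fun j hj =>
    gfac_eq (j + 1) M (by omega) (by have := Finset.mem_range.mp hj; omega)]
  rw [Finset.prod_div_distrib, Finset.prod_mul_distrib, Finset.prod_mul_distrib,
    Finset.prod_const, Finset.prod_const, Finset.card_range,
    ← Real.rpow_sum_of_pos hMR]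
  have hs : ∑ j ∈ Finset.range N, ((M : ℝ) - ((j : ℕ) + 1 : ℕ) + 1/2) =
      N * (M : ℝ) - (N : ℝ) ^ 2 / 2 := by
    push_cast
    exact sum_aux N M
  rw [hs]
  have hexpN : Real.exp (-(M : ℝ)) ^ N = Real.exp (-(M * N : ℝ)) := by
    rw [← Real.exp_nat_mul]
    congr 1
    ring
  have h2pi : Real.sqrt (2 * Real.pi) ^ N =
      (2 : ℝ) ^ ((N : ℝ) / 2) * Real.pi ^ ((N : ℝ) / 2) := by
    rw [Real.sqrt_eq_rpow, ← Real.rpow_natCast ((2 * Real.pi) ^ (1/2 : ℝ)) N,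
      ← Real.rpow_mul (by positivity),
      Real.mul_rpow (by norm_num) Real.pi_pos.le]
    rw [show (1 / 2 : ℝ) * (N : ℕ) = (N : ℝ) / 2 by ring]
  have hNN : ((N * (N - 1) / 2 : ℕ) : ℝ) = (N : ℝ) * ((N : ℝ) - 1) / 2 := by
    have h2 : 2 ∣ N * (N - 1) := by
      have h := Nat.even_mul_succ_self (N - 1)
      rw [Nat.sub_add_cancel hN] at h
      rw [mul_comm]
      exact h.two_dvd
    rw [Nat.cast_div h2 (by norm_num)]
    push_cast [Nat.cast_sub hN]
    ring
  have hQcast : Real.pi ^ (N * (N - 1) / 2) =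
      Real.pi ^ ((N : ℝ) * ((N : ℝ) - 1) / 2 : ℝ) := by
    rw [← Real.rpow_natCast Real.pi (N * (N - 1) / 2), hNN]
  have hMpow : (M : ℝ) ^ ((N : ℝ) ^ 2 / 2) * (M : ℝ) ^ (N * (M - N)) =
      (M : ℝ) ^ ((N : ℝ) * (M : ℝ) - (N : ℝ) ^ 2 / 2 : ℝ) := by
    rw [← Real.rpow_natCast (M : ℝ) (N * (M - N)), ← Real.rpow_add hMR]
    congr 1
    have : ((N * (M - N) : ℕ) : ℝ) = (N : ℝ) * ((M : ℝ) - N) := by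
      push_cast [Nat.cast_sub (by omega : N ≤ M)]
      ring
    rw [this]
    ring
  have e2 : (2 : ℝ) ^ (-(N : ℝ) / 2) * (2 : ℝ) ^ ((N : ℝ) / 2) = 1 := by
    rw [← Real.rpow_add (by norm_num : (0 : ℝ) < 2),
      show -(N : ℝ) / 2 + (N : ℝ) / 2 = 0 by ring, Real.rpow_zero]
  have epi : Real.pi ^ (-(N : ℝ) ^ 2 / 2) * Real.pi ^ ((N : ℝ) / 2) *
      Real.pi ^ ((N : ℝ) * ((N : ℝ) - 1) / 2 : ℝ) = 1 := by
    rw [← Real.rpow_add Real.pi_pos, ← Real.rpow_add Real.pi_pos,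
      show -(N : ℝ) ^ 2 / 2 + (N : ℝ) / 2 + (N : ℝ) * ((N : ℝ) - 1) / 2 = 0 by ring,
      Real.rpow_zero]
  have main : T * (Real.sqrt (2 * Real.pi) ^ N * Real.exp (-(M : ℝ)) ^ N *
        (M : ℝ) ^ ((N : ℝ) * (M : ℝ) - (N : ℝ) ^ 2 / 2 : ℝ)) *
        Real.pi ^ (N * (N - 1) / 2) =
      Real.exp (-(M * N : ℝ)) * (M : ℝ) ^ ((N : ℝ) ^ 2 / 2) * (M : ℝ) ^ (N * (M - N)) := by
    rw [h2pi, hexpN, hQcast, hT]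
    calc (2 : ℝ) ^ (-(N : ℝ) / 2) * Real.pi ^ (-(N : ℝ) ^ 2 / 2) *
          ((2 : ℝ) ^ ((N : ℝ) / 2) * Real.pi ^ ((N : ℝ) / 2) * Real.exp (-(M * N : ℝ)) *
            (M : ℝ) ^ ((N : ℝ) * (M : ℝ) - (N : ℝ) ^ 2 / 2 : ℝ)) *
          Real.pi ^ ((N : ℝ) * ((N : ℝ) - 1) / 2 : ℝ)
        = ((2 : ℝ) ^ (-(N : ℝ) / 2) * (2 : ℝ) ^ ((N : ℝ) / 2)) *
            (Real.pi ^ (-(N : ℝ) ^ 2 / 2) * Real.pi ^ ((N : ℝ) / 2) *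
              Real.pi ^ ((N : ℝ) * ((N : ℝ) - 1) / 2 : ℝ)) *
            (Real.exp (-(M * N : ℝ)) *
              (M : ℝ) ^ ((N : ℝ) * (M : ℝ) - (N : ℝ) ^ 2 / 2 : ℝ)) := by ring
      _ = Real.exp (-(M * N : ℝ)) * (M : ℝ) ^ ((N : ℝ) ^ 2 / 2) * (M : ℝ) ^ (N * (M - N)) := by
          rw [e2, epi, one_mul, one_mul, ← hMpow]; ring
  rw [← mul_div_assoc, div_eq_div_iff hP.ne' (mul_pos hQ hP).ne']
  linear_combination (∏ j ∈ Finset.range N, ((M - (j + 1)).factorial : ℝ)) * main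
end
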